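/- Let P₀, …, Pₙ be points in ℝ³ with consecutive points distinct, and suppose every exterior angle αₘ (1 ≤ m ≤ n−1) of the open PL curve satisfies αₘ < π/(n−1). Then the PL curve is simple. -/

import Mathlib

open InnerProductGeometry

open Real

variable {V : Type*} [NormedAddCommGroup V] [InnerProductSpace ℝ V]

local notation "⟪" x ", " y "⟫" => @inner ℝ _ _ x y

lemma unit_inner_eq_cos {x y : V} (hx : ‖x‖ = 1) (hy : ‖y‖ = 1) :
    ⟪x, y⟫ = Real.cos (angle x y) := by
  rw [cos_angle, hx, hy]; simp

lemma angle_triangle_unit {x y z : V} (hx : ‖x‖ = 1) (hy : ‖y‖ = 1) (hz : ‖z‖ = 1) :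
    angle x z ≤ angle x y + angle y z := by
  by_cases hpi : π ≤ angle x y + angle y z
  · exact le_trans (angle_le_pi _ _) hpi
  push_neg at hpi
  set a := angle x y with ha
  set b := angle y z with hb
  set c := angle x z with hc
  have ha0 := angle_nonneg x y
  have hb0 := angle_nonneg y z
  have hc0 := angle_nonneg x z
  have hcpi := angle_le_pi x z
  set p : ℝ := ⟪x, y⟫ with hp
  set q : ℝ := ⟪y, z⟫ with hq
  have hcosa : Real.cos a = p := (unit_inner_eq_cos hx hy).symm
  have hcosb : Real.cos b = q := (unit_inner_eq_cos hy hz).symm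
  have hcosc : Real.cos c = ⟪x, z⟫ := (unit_inner_eq_cos hx hz).symm
  have hsina : Real.sin a = Real.sqrt (1 - p ^ 2) := by
    rw [Real.sin_eq_sqrt_one_sub_cos_sq ha0 (angle_le_pi _ _), hcosa]
  have hsinb : Real.sin b = Real.sqrt (1 - q ^ 2) := by
    rw [Real.sin_eq_sqrt_one_sub_cos_sq hb0 (angle_le_pi _ _), hcosb]
  have hkey : p * q - Real.sqrt (1 - p ^ 2) * Real.sqrt (1 - q ^ 2) ≤ ⟪x, z⟫ := by
    set x' : V := x - p • y with hx'
    set z' : V := z - q • y with hz'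
    have hyy : ⟪y, y⟫ = (1:ℝ) := by
      rw [real_inner_self_eq_norm_sq, hy]; norm_num
    have h1 : ⟪x', z'⟫ = ⟪x, z⟫ - p * q := by
      simp only [hx', hz', inner_sub_left, inner_sub_right, real_inner_smul_left,
        real_inner_smul_right, hyy]
      rw [← hp, ← hq]; ring
    have h2 : ‖x'‖ = Real.sqrt (1 - p ^ 2) := by
      have h2' : ⟪x', x'⟫ = 1 - p ^ 2 := by
        simp only [hx', inner_sub_left, inner_sub_right, real_inner_smul_left,
          real_inner_smul_right, hyy]
        rw [real_inner_comm x y, real_inner_self_eq_norm_sq, hx, ← hp]; ring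
      rw [← Real.sqrt_sq (norm_nonneg x'), ← real_inner_self_eq_norm_sq, h2']
    have h3 : ‖z'‖ = Real.sqrt (1 - q ^ 2) := by
      have h3' : ⟪z', z'⟫ = 1 - q ^ 2 := by
        simp only [hz', inner_sub_left, inner_sub_right, real_inner_smul_left,
          real_inner_smul_right, hyy]
        rw [real_inner_comm y z, real_inner_self_eq_norm_sq, hz, ← hq]; ring
      rw [← Real.sqrt_sq (norm_nonneg z'), ← real_inner_self_eq_norm_sq, h3']
    have h4 : -(‖x'‖ * ‖z'‖) ≤ ⟪x', z'⟫ := by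
      have := abs_real_inner_le_norm x' z'
      have := neg_abs_le (⟪x', z'⟫ : ℝ)
      linarith
    rw [h1, h2, h3] at h4
    linarith
  have hcos : Real.cos (a + b) ≤ Real.cos c := by
    rw [Real.cos_add, hcosa, hcosb, hsina, hsinb, hcosc]
    exact hkey
  by_contra hcon
  push_neg at hcon
  have := Real.cos_lt_cos_of_nonneg_of_le_pi (by linarith) hcpi hcon
  linarith

lemma exists_slerp {u v : V} (hu : ‖u‖ = 1) (hv : ‖v‖ = 1)
    (hpi : angle u v < π) {r : ℝ} (hr0 : 0 ≤ r) (hr : r ≤ angle u v) :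
    ∃ w : V, ‖w‖ = 1 ∧ angle w u = r ∧ angle w v = angle u v - r := by
  set θ := angle u v with hθdef
  have hθ0 := angle_nonneg u v
  have hθpi : θ ≤ π := angle_le_pi u v
  rcases eq_or_lt_of_le hθ0 with hθz | hθpos
  · have hr0' : r = 0 := le_antisymm (hr.trans hθz.symm.le) hr0
    refine ⟨u, hu, ?_, ?_⟩
    · rw [hr0', angle_self (by rw [← norm_ne_zero_iff, hu]; norm_num)]
    · rw [hr0']; simp [hθdef]
  · have hS : 0 < Real.sin θ := Real.sin_pos_of_pos_of_lt_pi hθpos hpi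
    have huv : ⟪u, v⟫ = Real.cos θ := unit_inner_eq_cos hu hv
    have hvu : ⟪v, u⟫ = Real.cos θ := by rw [real_inner_comm]; exact huv
    set w : V := (Real.sin (θ - r) / Real.sin θ) • u + (Real.sin r / Real.sin θ) • v with hw
    have huu : ⟪u, u⟫ = (1:ℝ) := by rw [real_inner_self_eq_norm_sq, hu]; norm_num
    have hvv : ⟪v, v⟫ = (1:ℝ) := by rw [real_inner_self_eq_norm_sq, hv]; norm_num
    have hwu : ⟪w, u⟫ = Real.cos r := by
      simp only [hw, inner_add_left, real_inner_smul_left, huu, hvu]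
      field_simp
      rw [Real.sin_sub]
      ring
    have hwv : ⟪w, v⟫ = Real.cos (θ - r) := by
      simp only [hw, inner_add_left, real_inner_smul_left, hvv, huv]
      field_simp
      rw [Real.sin_sub, Real.cos_sub]
      linear_combination (-(Real.sin r)) * Real.sin_sq_add_cos_sq θ
    have hww : ⟪w, w⟫ = (1:ℝ) := by
      simp only [hw, inner_add_left, inner_add_right, real_inner_smul_left,
        real_inner_smul_right, huu, hvv, hvu, huv]
      field_simp
      rw [Real.sin_sub]
      linear_combination (-(Real.sin r)^2) * Real.sin_sq_add_cos_sq θ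
        + (Real.sin θ)^2 * Real.sin_sq_add_cos_sq r
    have hnw : ‖w‖ = 1 := by
      rw [← Real.sqrt_sq (norm_nonneg w), ← real_inner_self_eq_norm_sq, hww, Real.sqrt_one]
    refine ⟨w, hnw, ?_, ?_⟩
    · rw [angle, hnw, hu, hwu]
      simpa using Real.arccos_cos hr0 (hr.trans hθpi)
    · rw [angle, hnw, hv, hwv]
      simpa using Real.arccos_cos (by linarith) (by linarith)

/-- Uniform piecewise linear parametrization over `[0,1]` of the PL curve with
vertices `P 0, P 1, …, P n`. -/
noncomputable def plParam (n : ℕ) (P : ℕ → EuclideanSpace ℝ (Fin 3)) (t : ℝ) :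
    EuclideanSpace ℝ (Fin 3) :=
  let j := min (n - 1) ⌊t * n⌋₊
  P j + (t * n - j) • (P (j + 1) - P j)

set_option maxHeartbeats 1000000 in
theorem stmt_8 (n : ℕ) (hn : 2 ≤ n) (P : ℕ → EuclideanSpace ℝ (Fin 3))
    (hdist : ∀ m < n, P m ≠ P (m + 1))
    (hang : ∀ m, 1 ≤ m → m ≤ n - 1 →
      angle (P m - P (m - 1)) (P (m + 1) - P m) < Real.pi / ((n : ℝ) - 1)) :
    Set.InjOn (plParam n P) (Set.Icc 0 1) := by
  classical
  have hnR : (2:ℝ) ≤ (n:ℝ) := by exact_mod_cast hn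
  -- edges and unit directions
  set E : ℕ → EuclideanSpace ℝ (Fin 3) := fun m => P (m+1) - P m with hE
  have hEne : ∀ m < n, E m ≠ 0 := fun m hm => sub_ne_zero_of_ne (hdist m hm).symm
  set u : ℕ → EuclideanSpace ℝ (Fin 3) := fun m => ‖E m‖⁻¹ • E m with hudef
  have hunit : ∀ m < n, ‖u m‖ = 1 := by
    intro m hm
    rw [hudef]
    simp only
    rw [norm_smul, norm_inv, norm_norm, inv_mul_cancel₀ (norm_ne_zero_iff.2 (hEne m hm))]
  have huangle : ∀ a b, a < n → b < n → angle (u a) (u b) = angle (E a) (E b) := by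
    intro a b ha hb
    rw [hudef]
    simp only
    rw [angle_smul_left_of_pos _ _ (inv_pos.2 (norm_pos_iff.2 (hEne a ha))),
      angle_smul_right_of_pos _ _ (inv_pos.2 (norm_pos_iff.2 (hEne b hb)))]
  set β : ℕ → ℝ := fun j => angle (u j) (u (j+1)) with hβdef
  have hβ0 : ∀ j, 0 ≤ β j := fun j => angle_nonneg _ _
  have hβ : ∀ j < n - 1, β j < Real.pi / ((n : ℝ) - 1) := by
    intro j hj
    have h1 : β j = angle (E j) (E (j+1)) := huangle j (j+1) (by omega) (by omega)
    have h2 := hang (j+1) (by omega) (by omega)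
    simp only [Nat.add_sub_cancel] at h2
    rw [h1]
    exact h2
  set s : ℕ → ℝ := fun m => ∑ j ∈ Finset.range m, β j with hsdef
  have hs0 : ∀ m, 0 ≤ s m := fun m => Finset.sum_nonneg fun j _ => hβ0 j
  have hsmono : ∀ a b, a ≤ b → s a ≤ s b := fun a b hab =>
    Finset.sum_le_sum_of_subset_of_nonneg (Finset.range_subset_range.2 hab) fun i _ _ => hβ0 i
  have hssucc : ∀ m, s (m+1) = s m + β m := fun m => Finset.sum_range_succ _ _
  set T : ℝ := s (n-1) with hTdef
  have hT0 : 0 ≤ T := hs0 _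
  have hT : T < Real.pi := by
    have h1 : T < ∑ _j ∈ Finset.range (n-1), Real.pi / ((n:ℝ) - 1) :=
      Finset.sum_lt_sum_of_nonempty (Finset.nonempty_range_iff.2 (by omega))
        fun j hj => hβ j (Finset.mem_range.1 hj)
    have h2 : ∑ _j ∈ Finset.range (n-1), Real.pi / ((n:ℝ) - 1)
        = ((n-1 : ℕ) : ℝ) * (Real.pi / ((n:ℝ) - 1)) := by
      rw [Finset.sum_const, Finset.card_range, nsmul_eq_mul]
    have h3 : ((n-1 : ℕ) : ℝ) = (n:ℝ) - 1 := by
      rw [Nat.cast_sub (by omega), Nat.cast_one]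
    have h4 : ((n:ℝ) - 1) * (Real.pi / ((n:ℝ) - 1)) = Real.pi := by
      have hne : (n:ℝ) - 1 ≠ 0 := by linarith
      field_simp
    rw [h2, h3, h4] at h1
    exact h1
  -- chain inequality
  have chain : ∀ a b, a ≤ b → b ≤ n - 1 → angle (u a) (u b) ≤ s b - s a := by
    intro a b hab
    induction b, hab using Nat.le_induction with
    | base =>
      intro hb
      have : u a ≠ 0 := by
        rw [← norm_ne_zero_iff, hunit a (by omega)]; norm_num
      rw [angle_self this]
      simp
    | succ b hab ih =>
      intro hb1
      have hb : b ≤ n - 1 := by omega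
      calc angle (u a) (u (b+1))
          ≤ angle (u a) (u b) + angle (u b) (u (b+1)) :=
            angle_triangle_unit (hunit a (by omega)) (hunit b (by omega))
              (hunit (b+1) (by omega))
        _ ≤ (s b - s a) + β b := add_le_add (ih hb) le_rfl
        _ = s (b+1) - s a := by rw [hssucc b]; ring
  -- the midpoint direction w
  set c : ℝ := T / 2 with hcdef
  have hc0 : 0 ≤ c := by positivity
  have hcpi : c < Real.pi / 2 := by rw [hcdef]; linarith
  set k : ℕ := Nat.findGreatest (fun m => s m ≤ c) (n-2) with hkdef
  have hks : s k ≤ c :=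
    Nat.findGreatest_spec (P := fun m => s m ≤ c) (m := 0) (Nat.zero_le _)
      (by simpa [hsdef] using hc0)
  have hk_le : k ≤ n - 2 := Nat.findGreatest_le _
  have hk1 : c ≤ s (k+1) := by
    rcases eq_or_lt_of_le hk_le with he | hlt
    · have hkk : k + 1 = n - 1 := by omega
      rw [hkk, ← hTdef, hcdef]
      linarith
    · have hng := Nat.findGreatest_is_greatest (by omega : Nat.findGreatest (fun m => s m ≤ c) (n-2) < k+1) (by omega)
      exact (not_le.1 hng).le
  have hkn : k + 1 ≤ n - 1 := by omega
  have hθpi : angle (u k) (u (k+1)) < Real.pi := by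
    have h1 := hβ k (by omega)
    have h2 : Real.pi / ((n:ℝ) - 1) ≤ Real.pi :=
      div_le_self Real.pi_pos.le (by linarith)
    rw [hβdef] at h1
    simp only at h1
    linarith
  have hrθ : c - s k ≤ angle (u k) (u (k+1)) := by
    have := hssucc k
    rw [hβdef] at this
    simp only at this
    linarith
  obtain ⟨w, hw1, hwk, hwk1⟩ :=
    exists_slerp (hunit k (by omega)) (hunit (k+1) (by omega)) hθpi
      (by linarith : (0:ℝ) ≤ c - s k) hrθ
  -- all directions make angle ≤ c with w
  have key : ∀ m, m ≤ n - 1 → angle w (u m) ≤ c := by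
    intro m hm
    rcases le_or_gt m k with hmk | hkm
    · calc angle w (u m)
          ≤ angle w (u k) + angle (u k) (u m) :=
            angle_triangle_unit hw1 (hunit k (by omega)) (hunit m (by omega))
        _ = (c - s k) + angle (u m) (u k) := by rw [hwk, angle_comm]
        _ ≤ (c - s k) + (s k - s m) := by
            have := chain m k hmk (by omega)
            linarith
        _ ≤ c := by linarith [hs0 m]
    · calc angle w (u m)
          ≤ angle w (u (k+1)) + angle (u (k+1)) (u m) :=
            angle_triangle_unit hw1 (hunit (k+1) (by omega)) (hunit m (by omega))
        _ ≤ (angle (u k) (u (k+1)) - (c - s k)) + (s m - s (k+1)) := by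
            have := chain (k+1) m hkm hm
            rw [hwk1]
            linarith
        _ ≤ c := by
            have h1 : s m ≤ T := by rw [hTdef]; exact hsmono m (n-1) hm
            have h2 := hssucc k
            rw [hβdef] at h2
            simp only at h2
            rw [hcdef] at *
            linarith
  -- all edges have positive inner product with w
  have hpos : ∀ m < n, 0 < (inner ℝ (E m) w : ℝ) := by
    intro m hm
    have hm1 : m ≤ n - 1 := by omega
    have h1 : 0 < (inner ℝ (u m) w : ℝ) := by
      rw [unit_inner_eq_cos (hunit m hm) hw1]
      apply Real.cos_pos_of_mem_Ioo
      constructor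
      · have := angle_nonneg (u m) w
        linarith [Real.pi_pos]
      · calc angle (u m) w = angle w (u m) := angle_comm _ _
          _ ≤ c := key m hm1
          _ < Real.pi / 2 := hcpi
    have h2 : E m = ‖E m‖ • u m := by
      rw [hudef]
      simp only
      rw [smul_inv_smul₀ (norm_ne_zero_iff.2 (hEne m hm))]
    calc (0:ℝ) < ‖E m‖ * (inner ℝ (u m) w : ℝ) :=
          mul_pos (norm_pos_iff.2 (hEne m hm)) h1
      _ = (inner ℝ (E m) w : ℝ) := by rw [← real_inner_smul_left, ← h2]
  -- monotone coordinate
  set F : ℕ → ℝ := fun m => (inner ℝ (P m) w : ℝ) with hF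
  set D : ℕ → ℝ := fun m => (inner ℝ (E m) w : ℝ) with hD
  have hstep : ∀ m, F (m+1) = F m + D m := by
    intro m
    rw [hF, hD, hE]
    simp only [inner_sub_left]
    ring
  have hFlt : ∀ a b, a < b → b ≤ n → F a < F b := by
    intro a b hab hbn
    induction b with
    | zero => omega
    | succ b ih =>
      have hDb : 0 < D b := hpos b (by omega)
      rcases Nat.lt_succ_iff_lt_or_eq.1 hab with h' | h'
      · have := ih h' (by omega)
        rw [hstep b]
        linarith
      · subst h'
        rw [hstep a]
        linarith
  have hFle : ∀ a b, a ≤ b → b ≤ n → F a ≤ F b := by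
    intro a b hab hbn
    rcases eq_or_lt_of_le hab with rfl | h
    · exact le_rfl
    · exact (hFlt a b h hbn).le
  set g : ℝ → ℝ := fun t => (inner ℝ (plParam n P t) w : ℝ) with hg
  have gform : ∀ t, g t = F (min (n-1) ⌊t*n⌋₊)
      + (t*(n:ℝ) - (min (n-1) ⌊t*(n:ℝ)⌋₊ : ℕ)) * D (min (n-1) ⌊t*(n:ℝ)⌋₊) := by
    intro t
    rw [hg]
    simp only [plParam]
    rw [inner_add_left, real_inner_smul_left]
  -- strict monotonicity of g on Icc 0 1
  have hgmono : ∀ t1 ∈ Set.Icc (0:ℝ) 1, ∀ t2 ∈ Set.Icc (0:ℝ) 1, t1 < t2 → g t1 < g t2 := by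
    intro t1 ht1 t2 ht2 h12
    have hn0 : (0:ℝ) < (n:ℝ) := by linarith
    set j1 : ℕ := min (n-1) ⌊t1*(n:ℝ)⌋₊ with hj1
    set j2 : ℕ := min (n-1) ⌊t2*(n:ℝ)⌋₊ with hj2
    have hj1n : j1 ≤ n - 1 := min_le_left _ _
    have hj2n : j2 ≤ n - 1 := min_le_left _ _
    have hfl1 : (j1:ℝ) ≤ t1 * n := by
      calc (j1:ℝ) ≤ (⌊t1*(n:ℝ)⌋₊ : ℝ) := by exact_mod_cast min_le_right _ _
        _ ≤ t1 * n := Nat.floor_le (mul_nonneg ht1.1 (Nat.cast_nonneg n))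
    have hfl2 : (j2:ℝ) ≤ t2 * n := by
      calc (j2:ℝ) ≤ (⌊t2*(n:ℝ)⌋₊ : ℝ) := by exact_mod_cast min_le_right _ _
        _ ≤ t2 * n := Nat.floor_le (mul_nonneg ht2.1 (Nat.cast_nonneg n))
    have hj12 : j1 ≤ j2 := by
      have : ⌊t1*(n:ℝ)⌋₊ ≤ ⌊t2*(n:ℝ)⌋₊ :=
        Nat.floor_mono (by nlinarith)
      omega
    rcases eq_or_lt_of_le hj12 with he | hlt
    · rw [gform t1, gform t2, ← hj1, ← hj2, ← he]
      have hd : 0 < D j1 := hpos j1 (by omega)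
      have htt : t1 * (n:ℝ) < t2 * n := by nlinarith
      nlinarith
    · have hj1lt : j1 < n - 1 := by omega
      have hj1floor : j1 = ⌊t1*(n:ℝ)⌋₊ := by omega
      have ht1lt : t1 * (n:ℝ) < (j1:ℝ) + 1 := by
        rw [hj1floor]
        exact_mod_cast Nat.lt_floor_add_one (t1*(n:ℝ))
      have e1 : g t1 < F (j1+1) := by
        rw [gform t1, ← hj1, hstep j1]
        have hd : 0 < D j1 := hpos j1 (by omega)
        nlinarith
      have e2 : F (j1+1) ≤ F j2 := hFle _ _ (by omega) (by omega)
      have e3 : F j2 ≤ g t2 := by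
        rw [gform t2, ← hj2]
        have hd : (0:ℝ) ≤ D j2 := (hpos j2 (by omega)).le
        nlinarith
      linarith
  -- conclude injectivity
  intro t1 ht1 t2 ht2 heq
  by_contra hne
  have hgeq : g t1 = g t2 := by rw [hg]; simp only [heq]
  rcases lt_or_gt_of_ne hne with h | h
  · exact absurd hgeq (ne_of_lt (hgmono t1 ht1 t2 ht2 h))
  · exact absurd hgeq.symm (ne_of_lt (hgmono t2 ht2 t1 ht1 h))
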